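/- arXiv:1103.2093 — 2 statements merged into one kernel-verified Lean document; each statement's English description precedes it below -/
import Mathlib

section
/- Let Δ ⊆ ℝ^d be a d-dimensional polytope with 0 in its interior. Then Δ is Q-reflexive if and only if Δ* is an almost reflexive lattice polytope. In particular, every reflexive polytope is both Q-reflexive and almost reflexive. -/
open Pointwise

noncomputable section

/-- The standard inner product on `n → ℝ`. -/
def dot {n : Type*} [Fintype n] (x y : n → ℝ) : ℝ := ∑ i, x i * y i

/-- The lattice points of `n → ℝ`: points with integer coordinates. -/
def latt (n : Type*) [Fintype n] : Set (n → ℝ) := {x | ∀ i, ∃ m : ℤ, x i = (m : ℝ)}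

/-- Polar dual `S* = {y | ⟨x,y⟩ ≥ -1 ∀ x ∈ S}`. -/
def polarDual {n : Type*} [Fintype n] (S : Set (n → ℝ)) : Set (n → ℝ) :=
  {y | ∀ x ∈ S, -1 ≤ dot x y}

/-- `[S]`: the convex hull of the lattice points of `S`. -/
def latticeHull {n : Type*} [Fintype n] (S : Set (n → ℝ)) : Set (n → ℝ) :=
  convexHull ℝ (S ∩ latt n)

/-- A polytope: the convex hull of a finite set. -/
def IsPolytope {n : Type*} [Fintype n] (P : Set (n → ℝ)) : Prop :=
  ∃ F : Set (n → ℝ), F.Finite ∧ P = convexHull ℝ F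

/-- A lattice polytope: the convex hull of a finite set of lattice points. -/
def IsLatticePolytope {n : Type*} [Fintype n] (P : Set (n → ℝ)) : Prop :=
  ∃ F : Set (n → ℝ), F.Finite ∧ F ⊆ latt n ∧ P = convexHull ℝ F

/-- A full-dimensional polytope `P` with `0` in its interior is Q-reflexive if
`[[P]*] = P*`. -/
def IsQReflexive {n : Type*} [Fintype n] (P : Set (n → ℝ)) : Prop :=
  IsPolytope P ∧ 0 ∈ interior P ∧ latticeHull (polarDual (latticeHull P)) = polarDual P

/-- A full-dimensional lattice polytope `P` with `0` in its interior is almost reflexive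
if `[[P*]*] = P`. -/
def IsAlmostReflexive {n : Type*} [Fintype n] (P : Set (n → ℝ)) : Prop :=
  IsLatticePolytope P ∧ 0 ∈ interior P ∧
    latticeHull (polarDual (latticeHull (polarDual P))) = P

/-- A full-dimensional lattice polytope `P` with `0` in its interior is reflexive
if `P*` is a lattice polytope. -/
def IsReflexive {n : Type*} [Fintype n] (P : Set (n → ℝ)) : Prop :=
  IsLatticePolytope P ∧ 0 ∈ interior P ∧ IsLatticePolytope (polarDual P)

lemma dot_comm {n : Type*} [Fintype n] (x y : n → ℝ) : dot x y = dot y x := by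
  simp [dot, mul_comm]

lemma dot_linear {d : ℕ} (f : (Fin d → ℝ) →L[ℝ] ℝ) (x : Fin d → ℝ) :
    dot x (fun i => f ((Pi.single i 1 : Fin d → ℝ))) = f x := by
  have hx : x = ∑ i, x i • (Pi.single i 1 : Fin d → ℝ) := by
    ext j
    simp [Pi.single_apply]
  conv_rhs => rw [hx]
  rw [map_sum]
  simp [dot, smul_eq_mul]

lemma subset_bipolar {n : Type*} [Fintype n] (S : Set (n → ℝ)) :
    S ⊆ polarDual (polarDual S) := by
  intro x hx y hy
  rw [dot_comm]
  exact hy x hx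

lemma bipolar {d : ℕ} (Δ : Set (Fin d → ℝ)) (hc : Convex ℝ Δ) (hcl : IsClosed Δ)
    (h0 : (0 : Fin d → ℝ) ∈ Δ) : polarDual (polarDual Δ) = Δ := by
  refine Set.Subset.antisymm ?_ (subset_bipolar Δ)
  intro y hy
  by_contra hyΔ
  obtain ⟨f, u, hfs, hfy⟩ := geometric_hahn_banach_closed_point hc hcl hyΔ
  have hu : 0 < u := by have := hfs 0 h0; simpa using this
  set F : (Fin d → ℝ) →L[ℝ] ℝ := (-u⁻¹) • f with hF
  have hdot : ∀ x, dot x (fun i => F ((Pi.single i 1 : Fin d → ℝ))) = -u⁻¹ * f x := by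
    intro x
    rw [dot_linear]
    simp [hF]
  have hgmem : (fun i => F ((Pi.single i 1 : Fin d → ℝ))) ∈ polarDual Δ := by
    intro x hx
    rw [hdot]
    have hfx : f x < u := hfs x hx
    have h1 : u⁻¹ * u = 1 := inv_mul_cancel₀ (ne_of_gt hu)
    nlinarith [inv_pos.mpr hu, mul_lt_mul_of_pos_left hfx (inv_pos.mpr hu)]
  have := hy _ hgmem
  rw [dot_comm, hdot] at this
  have h1 : u⁻¹ * u = 1 := inv_mul_cancel₀ (ne_of_gt hu)
  nlinarith [inv_pos.mpr hu, mul_lt_mul_of_pos_left hfy (inv_pos.mpr hu)]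

lemma dot_single {d : ℕ} (i : Fin d) (c : ℝ) (y : Fin d → ℝ) :
    dot (c • (Pi.single i 1 : Fin d → ℝ)) y = c * y i := by
  simp [dot, Pi.single_apply, ite_mul, mul_ite, Finset.sum_ite_eq']

lemma zero_mem_interior_polarDual {d : ℕ} (S : Set (Fin d → ℝ))
    (hb : Bornology.IsBounded S) : (0 : Fin d → ℝ) ∈ interior (polarDual S) := by
  obtain ⟨R, hR⟩ := (Metric.isBounded_iff_subset_closedBall 0).mp hb
  set R' : ℝ := max R 1 with hR'
  have hR'1 : (1:ℝ) ≤ R' := le_max_right R 1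
  set ε : ℝ := ((d : ℝ) * R' + 1)⁻¹ with hε
  have hεpos : 0 < ε := by
    apply inv_pos.mpr
    positivity
  have hprod : ((d : ℝ) * R' + 1) * ε = 1 := mul_inv_cancel₀ (by positivity)
  have key : Metric.ball (0 : Fin d → ℝ) ε ⊆ polarDual S := by
    intro y hy x hx
    have hyn : ‖y‖ < ε := by simpa [Metric.mem_ball, dist_zero_right] using hy
    have hxn : ‖x‖ ≤ R' := by
      have := hR hx
      rw [Metric.mem_closedBall, dist_zero_right] at this
      exact this.trans (le_max_left R 1)
    have habs : |dot x y| ≤ (d : ℝ) * R' * ‖y‖ := by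
      calc |dot x y| ≤ ∑ i, |x i * y i| := Finset.abs_sum_le_sum_abs _ _
        _ ≤ ∑ _i : Fin d, R' * ‖y‖ := by
            refine Finset.sum_le_sum fun i _ => ?_
            rw [abs_mul]
            exact mul_le_mul ((Real.norm_eq_abs (x i) ▸ norm_le_pi_norm x i).trans hxn)
              (Real.norm_eq_abs (y i) ▸ norm_le_pi_norm y i) (abs_nonneg _)
              (le_trans zero_le_one hR'1)
        _ = (d : ℝ) * R' * ‖y‖ := by
            rw [Finset.sum_const, Finset.card_univ, Fintype.card_fin, nsmul_eq_mul]; ring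
    have h1 : -((d:ℝ) * R' * ‖y‖) ≤ dot x y := neg_le_of_abs_le habs
    have h2 : 0 ≤ (d:ℝ) * R' := by positivity
    nlinarith [mul_le_mul_of_nonneg_left hyn.le h2, norm_nonneg y]
  exact mem_interior.mpr ⟨_, key, Metric.isOpen_ball, Metric.mem_ball_self hεpos⟩

lemma isBounded_polarDual {d : ℕ} (S : Set (Fin d → ℝ))
    (h0 : (0 : Fin d → ℝ) ∈ interior S) : Bornology.IsBounded (polarDual S) := by
  obtain ⟨ε, hε, hball⟩ := Metric.isOpen_iff.mp isOpen_interior 0 h0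
  have hball' : Metric.ball (0 : Fin d → ℝ) ε ⊆ S := hball.trans interior_subset
  rw [Metric.isBounded_iff_subset_closedBall 0]
  refine ⟨2 / ε, fun y hy => ?_⟩
  rw [Metric.mem_closedBall, dist_zero_right,
    pi_norm_le_iff_of_nonneg (by positivity)]
  intro i
  have hmem : ∀ c : ℝ, |c| < ε → (c • (Pi.single i 1 : Fin d → ℝ)) ∈ S := by
    intro c hc
    apply hball'
    rw [Metric.mem_ball, dist_zero_right]
    refine lt_of_le_of_lt ((pi_norm_le_iff_of_nonneg (abs_nonneg c)).mpr fun j => ?_) hc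
    simp only [Pi.smul_apply, Pi.single_apply, smul_eq_mul, Real.norm_eq_abs]
    rcases eq_or_ne j i with h | h <;> simp [h, abs_nonneg]
  have hb1 := hy _ (hmem (ε/2) (by rw [abs_of_pos (by positivity)]; linarith))
  have hb2 := hy _ (hmem (-(ε/2)) (by rw [abs_neg, abs_of_pos (by positivity)]; linarith))
  rw [dot_single] at hb1 hb2
  have h2 : ε * (2 / ε) = 2 := by field_simp
  rw [Real.norm_eq_abs, abs_le]
  constructor <;> nlinarith

lemma finite_of_bounded_latt {d : ℕ} (S : Set (Fin d → ℝ)) (hS : S ⊆ latt (Fin d))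
    (hb : Bornology.IsBounded S) : S.Finite := by
  obtain ⟨R, hR⟩ := (Metric.isBounded_iff_subset_closedBall 0).mp hb
  have hsub : S ⊆ Set.pi Set.univ
      (fun _ : Fin d => ((↑) : ℤ → ℝ) '' (Set.Icc (-⌈R⌉) ⌈R⌉)) := by
    intro x hx i _
    obtain ⟨m, hm⟩ := hS hx i
    refine ⟨m, ⟨?_, ?_⟩, hm.symm⟩
    · have h1 : -(x i) ≤ R := by
        have := (hR hx)
        rw [Metric.mem_closedBall, dist_zero_right] at this
        have := (Real.norm_eq_abs (x i) ▸ norm_le_pi_norm x i).trans this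
        cases abs_le.mp this with | intro a b => linarith
      rw [hm] at h1
      have : ((-m : ℤ) : ℝ) ≤ (⌈R⌉ : ℝ) := by push_cast; exact h1.trans (Int.le_ceil R)
      have := (by exact_mod_cast this : (-m : ℤ) ≤ ⌈R⌉)
      omega
    · have h1 : x i ≤ R := by
        have := (hR hx)
        rw [Metric.mem_closedBall, dist_zero_right] at this
        have := (Real.norm_eq_abs (x i) ▸ norm_le_pi_norm x i).trans this
        cases abs_le.mp this with | intro a b => linarith
      rw [hm] at h1
      exact (by exact_mod_cast h1.trans (Int.le_ceil R) : m ≤ ⌈R⌉)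
  exact Set.Finite.subset (Set.Finite.pi fun i => (Set.finite_Icc _ _).image _) hsub

lemma latticeHull_eq_self {n : Type*} [Fintype n] {P : Set (n → ℝ)}
    (h : IsLatticePolytope P) : latticeHull P = P := by
  obtain ⟨F, hF, hFl, rfl⟩ := h
  refine Set.Subset.antisymm
    (convexHull_min Set.inter_subset_left (convex_convexHull ℝ F)) ?_
  exact convexHull_mono fun x hx => ⟨subset_convexHull ℝ F hx, hFl hx⟩

/-- Let `Δ ⊆ ℝ^d` be a `d`-dimensional polytope with `0` in its interior.
Then `Δ` is Q-reflexive iff `Δ*` is an almost reflexive lattice polytope.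
In particular, every reflexive polytope is both Q-reflexive and almost reflexive. -/
theorem qreflexive_iff_dual_almostReflexive {d : ℕ} (hd : 0 < d) (Δ : Set (Fin d → ℝ))
    (hpoly : IsPolytope Δ) (h0 : 0 ∈ interior Δ) :
    (IsQReflexive Δ ↔ IsAlmostReflexive (polarDual Δ)) ∧
      (IsReflexive Δ → IsQReflexive Δ ∧ IsAlmostReflexive Δ) := by
  have hconv : Convex ℝ Δ := by
    obtain ⟨F, hF, rfl⟩ := hpoly; exact convex_convexHull ℝ F
  have hcomp : IsCompact Δ := by
    obtain ⟨F, hF, rfl⟩ := hpoly; exact hF.isCompact_convexHull (𝕜 := ℝ)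
  have hbip : polarDual (polarDual Δ) = Δ :=
    bipolar Δ hconv hcomp.isClosed (interior_subset h0)
  constructor
  · constructor
    · rintro ⟨-, -, hQ⟩
      refine ⟨?_, zero_mem_interior_polarDual Δ hcomp.isBounded, ?_⟩
      · refine ⟨polarDual (latticeHull Δ) ∩ latt (Fin d), ?_,
          Set.inter_subset_right, hQ.symm⟩
        refine finite_of_bounded_latt _ Set.inter_subset_right
          ((isBounded_polarDual Δ h0).subset ?_)
        have := subset_convexHull ℝ (polarDual (latticeHull Δ) ∩ latt (Fin d))
        rw [show convexHull ℝ (polarDual (latticeHull Δ) ∩ latt (Fin d)) =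
            latticeHull (polarDual (latticeHull Δ)) from rfl, hQ] at this
        exact this
      · rw [hbip]; exact hQ
    · rintro ⟨-, -, hA⟩
      refine ⟨hpoly, h0, ?_⟩
      rwa [hbip] at hA
  · rintro ⟨hlat, -, hdual⟩
    have e1 : latticeHull Δ = Δ := latticeHull_eq_self hlat
    have e2 : latticeHull (polarDual Δ) = polarDual Δ := latticeHull_eq_self hdual
    exact ⟨⟨hpoly, h0, by rw [e1, e2]⟩, ⟨hlat, h0, by rw [e2, hbip, e1]⟩⟩
end
end

section
/- If Δ ⊆ ℝ^d is an almost reflexive lattice polytope, then Δ• := [Δ*] = conv(Δ* ∩ ℤ^d) is an almost reflexive lattice polytope and (Δ•)• = Δ; thus Δ ↦ Δ• is an involution on the set of almost reflexive polytopes in ℝ^d. -/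
open Pointwise

noncomputable section

section AuxLemmas

variable {d : ℕ}

lemma dot_zero_right (x : Fin d → ℝ) : dot x 0 = 0 := by simp [dot]

lemma dot_smul_right (c : ℝ) (x y : Fin d → ℝ) : dot x (c • y) = c * dot x y := by
  simp only [dot, Finset.mul_sum, Pi.smul_apply, smul_eq_mul]
  exact Finset.sum_congr rfl fun i _ => by ring

lemma convex_polarDual (S : Set (Fin d → ℝ)) : Convex ℝ (polarDual S) := by
  intro y hy z hz a b ha hb hab
  intro x hx
  have hy' := hy x hx
  have hz' := hz x hx
  have : dot x (a • y + b • z) = a * dot x y + b * dot x z := by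
    simp only [dot, Finset.mul_sum, Pi.smul_apply, smul_eq_mul]
    rw [← Finset.sum_add_distrib]
    apply Finset.sum_congr rfl; intro i _
    simp only [Pi.add_apply, Pi.smul_apply, smul_eq_mul]
    ring
  rw [this]
  nlinarith

lemma zero_mem_polarDual (S : Set (Fin d → ℝ)) : (0 : Fin d → ℝ) ∈ polarDual S := by
  intro x _; rw [dot_zero_right]; norm_num

lemma zero_mem_latt : (0 : Fin d → ℝ) ∈ latt (Fin d) := fun i => ⟨0, by simp⟩

lemma latticeHull_subset {S : Set (Fin d → ℝ)} (hS : Convex ℝ S) : latticeHull S ⊆ S :=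
  convexHull_min Set.inter_subset_left hS

lemma abs_dot_le (x y : Fin d → ℝ) : |dot x y| ≤ d * ‖x‖ * ‖y‖ := by
  calc |dot x y| ≤ ∑ i, |x i * y i| := Finset.abs_sum_le_sum_abs _ _
    _ ≤ ∑ _i : Fin d, ‖x‖ * ‖y‖ := by
        apply Finset.sum_le_sum
        intro i _
        rw [abs_mul]
        exact mul_le_mul (by simpa using norm_le_pi_norm x i)
          (by simpa using norm_le_pi_norm y i) (abs_nonneg _) (norm_nonneg _)
    _ = d * ‖x‖ * ‖y‖ := by simp [mul_assoc]

lemma polar_coord_bound {S : Set (Fin d → ℝ)} {r : ℝ} (hr : 0 < r)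
    (hball : Metric.ball (0 : Fin d → ℝ) r ⊆ S) {y : Fin d → ℝ}
    (hy : y ∈ polarDual S) (i : Fin d) : |y i| ≤ 2 / r := by
  have hmem : ∀ c : ℝ, |c| < r → (c • (Pi.single i 1 : Fin d → ℝ)) ∈ S := by
    intro c hc
    apply hball
    rw [Metric.mem_ball, dist_zero_right]
    rcases eq_or_lt_of_le (abs_nonneg c) with h0 | h0
    · have : c = 0 := by rwa [eq_comm, abs_eq_zero] at h0
      simpa [this] using hr
    · rw [pi_norm_lt_iff hr]
      intro j
      rw [Pi.smul_apply, Pi.single_apply]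
      by_cases hij : j = i <;> simp [hij, abs_of_nonneg, hc, hr]
  have hds : ∀ c : ℝ, dot (c • (Pi.single i 1 : Fin d → ℝ)) y = c * y i := by
    intro c
    simp [dot, Pi.single_apply, ite_mul, Finset.sum_ite_eq']
  have h1 := hy _ (hmem (r/2) (by rw [abs_of_pos (by positivity)]; linarith))
  have h2 := hy _ (hmem (-(r/2)) (by rw [abs_neg, abs_of_pos (by positivity)]; linarith))
  rw [hds] at h1 h2
  rw [abs_le]
  constructor
  · rw [neg_le, le_div_iff₀ hr]
    linarith
  · rw [le_div_iff₀ hr]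
    linarith

lemma latt_bounded_finite (N : ℝ) :
    {y : Fin d → ℝ | y ∈ latt (Fin d) ∧ ∀ i, |y i| ≤ N}.Finite := by
  have : {y : Fin d → ℝ | y ∈ latt (Fin d) ∧ ∀ i, |y i| ≤ N} ⊆
      Set.univ.pi (fun _ : Fin d => (fun m : ℤ => (m : ℝ)) '' (Set.Icc (-⌈N⌉) ⌈N⌉)) := by
    rintro y ⟨hlatt, hbd⟩ i _
    obtain ⟨m, hm⟩ := hlatt i
    refine ⟨m, ?_, hm.symm⟩
    have := hbd i
    rw [hm, abs_le] at this
    constructor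
    · have h1 : ((-⌈N⌉ : ℤ) : ℝ) ≤ (m : ℝ) := by push_cast; linarith [Int.le_ceil N]
      exact_mod_cast h1
    · have h1 : ((m : ℤ) : ℝ) ≤ ((⌈N⌉ : ℤ) : ℝ) := le_trans this.2 (Int.le_ceil N)
      exact_mod_cast h1
  exact Set.Finite.subset (Set.Finite.pi fun _ => (Set.finite_Icc _ _).image _) this

lemma bounded_of_latt_bounded {C : Set (Fin d → ℝ)} (hC : Convex ℝ C)
    {r R : ℝ} (hr : 0 < r) (hball : Metric.ball (0 : Fin d → ℝ) r ⊆ C)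
    (hlatt : ∀ m, m ∈ C → m ∈ latt (Fin d) → ‖m‖ ≤ R) :
    ∃ M : ℝ, 0 < M ∧ ∀ y ∈ C, ‖y‖ ≤ M := by
  set ε : ℝ := r / 4 with hε
  have hεpos : 0 < ε := by positivity
  set Nc : ℕ := ⌊1/ε⌋.toNat + 1 with hNc
  set K : ℕ := Nc ^ d with hKdef
  have hKpos : 0 < K := Nat.pow_pos (Nat.succ_pos _)
  have hKR : (0:ℝ) < (K:ℝ) := by exact_mod_cast hKpos
  refine ⟨2 * K * (|R| + ε + 1), by positivity, ?_⟩
  intro y hy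
  by_contra hcon
  push_neg at hcon
  set c : Fin d → ℝ := (1 / (2 * (K:ℝ))) • y with hc
  have hcell : ∀ (k : Fin (K+1)) (i : Fin d),
      (⌊Int.fract ((k:ℕ) * c i) / ε⌋).toNat < Nc := by
    intro k i
    have h1 : Int.fract ((k:ℕ) * c i) ≤ 1 := (Int.fract_lt_one _).le
    have h2 : ⌊Int.fract ((k:ℕ) * c i) / ε⌋ ≤ ⌊1/ε⌋ := by
      apply Int.floor_le_floor
      gcongr
    omega
  set g : Fin (K+1) → (Fin d → Fin Nc) :=
    fun k i => ⟨(⌊Int.fract ((k:ℕ) * c i) / ε⌋).toNat, hcell k i⟩ with hg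
  obtain ⟨a, b, hlt, hgeq⟩ : ∃ a b : Fin (K+1), (a:ℕ) < (b:ℕ) ∧ g a = g b := by
    obtain ⟨a, b, hab, hgeq⟩ := Fintype.exists_ne_map_eq_of_card_lt g
      (by simp only [Fintype.card_fun, Fintype.card_fin]; omega)
    have : (a:ℕ) ≠ (b:ℕ) := fun h => hab (Fin.val_injective h)
    rcases this.lt_or_gt with h | h
    · exact ⟨a, b, h, hgeq⟩
    · exact ⟨b, a, h, hgeq.symm⟩
  have hfloor : ∀ i, ⌊Int.fract ((a:ℕ) * c i) / ε⌋ = ⌊Int.fract ((b:ℕ) * c i) / ε⌋ := by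
    intro i
    have h1 : (g a i : ℕ) = (g b i : ℕ) := by rw [hgeq]
    simp only [hg] at h1
    have ha0 : (0:ℤ) ≤ ⌊Int.fract ((a:ℕ) * c i) / ε⌋ :=
      Int.floor_nonneg.mpr (div_nonneg (Int.fract_nonneg _) hεpos.le)
    have hb0 : (0:ℤ) ≤ ⌊Int.fract ((b:ℕ) * c i) / ε⌋ :=
      Int.floor_nonneg.mpr (div_nonneg (Int.fract_nonneg _) hεpos.le)
    omega
  have hclose : ∀ i, |Int.fract ((b:ℕ) * c i) - Int.fract ((a:ℕ) * c i)| < ε := by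
    intro i
    set qa := Int.fract ((a:ℕ) * c i) with hqa
    set qb := Int.fract ((b:ℕ) * c i) with hqb
    have hf := hfloor i
    have la1 : (⌊qa/ε⌋ : ℝ) * ε ≤ qa := by
      rw [← le_div_iff₀ hεpos]; exact Int.floor_le _
    have la2 : qa < ((⌊qa/ε⌋ : ℝ) + 1) * ε := by
      rw [← div_lt_iff₀ hεpos]; exact Int.lt_floor_add_one _
    have lb1 : (⌊qb/ε⌋ : ℝ) * ε ≤ qb := by
      rw [← le_div_iff₀ hεpos]; exact Int.floor_le _
    have lb2 : qb < ((⌊qb/ε⌋ : ℝ) + 1) * ε := by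
      rw [← div_lt_iff₀ hεpos]; exact Int.lt_floor_add_one _
    rw [← hf] at lb1 lb2
    rw [abs_lt]
    constructor <;> nlinarith
  set m : Fin d → ℝ := fun i => ((⌊((b:ℕ) : ℝ) * c i⌋ - ⌊((a:ℕ) : ℝ) * c i⌋ : ℤ) : ℝ)
    with hm
  set t : ℝ := ((b:ℕ) : ℝ) - ((a:ℕ) : ℝ) with ht
  set p : Fin d → ℝ := t • c with hp
  have hpm : ∀ i, p i - m i = Int.fract ((b:ℕ) * c i) - Int.fract ((a:ℕ) * c i) := by
    intro i
    rw [← Int.self_sub_floor, ← Int.self_sub_floor]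
    simp only [hp, hm, ht, Pi.smul_apply, smul_eq_mul]
    push_cast
    ring
  have hnormpm : ‖p - m‖ < ε := by
    rw [pi_norm_lt_iff hεpos]
    intro i
    rw [Pi.sub_apply, Real.norm_eq_abs, hpm i]
    exact hclose i
  have ht1 : 1 ≤ t := by
    rw [ht]
    have : (a:ℕ) + 1 ≤ (b:ℕ) := hlt
    have := (Nat.cast_le (α := ℝ)).mpr this
    push_cast at this
    linarith
  have htK : t ≤ (K:ℝ) := by
    rw [ht]
    have : (b:ℕ) ≤ K := Nat.lt_succ_iff.mp b.isLt
    have := (Nat.cast_le (α := ℝ)).mpr this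
    have ha0 : (0:ℝ) ≤ ((a:ℕ):ℝ) := Nat.cast_nonneg _
    linarith
  set μ : ℝ := t / (2 * (K:ℝ)) with hμ
  have hμpos : 0 < μ := by positivity
  have hμhalf : μ ≤ 1/2 := by
    rw [hμ, div_le_iff₀ (by positivity)]
    linarith
  have hμlow : 1 / (2 * (K:ℝ)) ≤ μ := by
    rw [hμ]
    gcongr
  have hpy : p = μ • y := by
    rw [hp, hc, smul_smul, hμ]
    congr 1
    field_simp
  have hmem : m ∈ C := by
    have h1μ : (0:ℝ) < 1 - μ := by linarith
    have humem : (1/(1-μ)) • (m - p) ∈ Metric.ball (0 : Fin d → ℝ) r := by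
      rw [Metric.mem_ball, dist_zero_right, norm_smul, Real.norm_eq_abs,
        abs_of_pos (by positivity)]
      have h2 : 1/(1-μ) ≤ 2 := by
        rw [div_le_iff₀ h1μ]; linarith
      have h3 : ‖m - p‖ < ε := by rwa [← norm_neg, neg_sub]
      calc 1/(1-μ) * ‖m - p‖ ≤ 2 * ‖m - p‖ := by
            apply mul_le_mul_of_nonneg_right h2 (norm_nonneg _)
        _ < 2 * ε := by linarith
        _ < r := by rw [hε]; linarith
    have := hC (hball humem) hy h1μ.le hμpos.le (by ring)
    have heq : (1-μ) • ((1/(1-μ)) • (m - p)) + μ • y = m := by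
      rw [smul_smul, mul_one_div, div_self h1μ.ne', one_smul, ← hpy]
      abel
    rwa [heq] at this
  have hmlatt : m ∈ latt (Fin d) := fun i => ⟨_, rfl⟩
  have hmR := hlatt m hmem hmlatt
  have hnp : ‖p‖ = μ * ‖y‖ := by
    rw [hpy, norm_smul, Real.norm_eq_abs, abs_of_pos hμpos]
  have hylow : (0:ℝ) ≤ ‖y‖ := norm_nonneg _
  have hkey : (1/(2*(K:ℝ))) * ‖y‖ ≤ μ * ‖y‖ := by
    apply mul_le_mul_of_nonneg_right hμlow hylow
  have hbig : |R| + 1 < ‖m‖ := by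
    have h1 : ‖p‖ - ‖m‖ ≤ ‖p - m‖ := norm_sub_norm_le _ _
    have h2 : (1/(2*(K:ℝ))) * (2 * K * (|R| + ε + 1)) < (1/(2*(K:ℝ))) * ‖y‖ := by
      apply mul_lt_mul_of_pos_left hcon (by positivity)
    have h3 : (1/(2*(K:ℝ))) * (2 * K * (|R| + ε + 1)) = |R| + ε + 1 := by
      field_simp
    nlinarith [hnormpm, hnp]
  have : ‖m‖ ≤ |R| := hmR.trans (le_abs_self R)
  linarith

lemma ball_subset_of_polar_bounded {K : Set (Fin d → ℝ)} (hK : Convex ℝ K)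
    (hcl : IsClosed K) (h0 : (0 : Fin d → ℝ) ∈ K) {M : ℝ} (hM : 0 < M)
    (hpol : ∀ y ∈ polarDual K, ‖y‖ ≤ M) :
    Metric.ball (0 : Fin d → ℝ) (1/(d*M+1)) ⊆ K := by
  intro z hz
  rw [Metric.mem_ball, dist_zero_right] at hz
  by_contra hzK
  obtain ⟨f, u, hfs, hfz⟩ := geometric_hahn_banach_closed_point hK hcl hzK
  have hu : 0 < u := by simpa using hfs 0 h0
  set w : Fin d → ℝ := fun i => f (Pi.single i 1) with hw
  have hfw : ∀ x : Fin d → ℝ, f x = dot x w := by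
    intro x
    have hx : x = ∑ i, x i • (Pi.single i 1 : Fin d → ℝ) := by
      conv_lhs => rw [← Finset.univ_sum_single x]
      apply Finset.sum_congr rfl
      intro i _
      funext j
      by_cases hij : j = i <;> simp [Pi.single_apply, hij]
    conv_lhs => rw [hx]
    rw [map_sum]
    simp only [map_smul, smul_eq_mul]
    rfl
  set y : Fin d → ℝ := (-(1/u)) • w with hy
  have hymem : y ∈ polarDual K := by
    intro x hx
    rw [dot_smul_right]
    have hfx : f x < u := hfs x hx
    rw [← hfw]
    have : f x / u < 1 := by rwa [div_lt_one hu]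
    calc (-1 : ℝ) ≤ -(f x / u) := by linarith
      _ = -(1/u) * f x := by ring
  have hyM : ‖y‖ ≤ M := hpol y hymem
  have hdzy : dot z y < -1 := by
    rw [dot_smul_right, ← hfw]
    have : 1 < f z / u := by rwa [lt_div_iff₀ hu, one_mul]
    calc -(1/u) * f z = -(f z / u) := by ring
      _ < -1 := by linarith
  have habs : |dot z y| ≤ d * ‖z‖ * ‖y‖ := abs_dot_le z y
  have h1 : (1:ℝ) < |dot z y| := by
    rw [abs_of_neg (by linarith)]
    linarith
  have h2 : (d:ℝ) * ‖z‖ * ‖y‖ < 1 := by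
    rcases Nat.eq_zero_or_pos d with hd0 | hd0
    · simp [hd0]
    have hdpos : (0:ℝ) < d := by exact_mod_cast hd0
    have hden : (0:ℝ) < d * M + 1 := by positivity
    calc (d:ℝ) * ‖z‖ * ‖y‖ ≤ d * ‖z‖ * M := by
          apply mul_le_mul_of_nonneg_left hyM (by positivity)
      _ < d * (1/(d*M+1)) * M := by
          apply mul_lt_mul_of_pos_right _ hM
          exact mul_lt_mul_of_pos_left hz hdpos
      _ ≤ 1 := by
          rw [mul_one_div, div_mul_eq_mul_div, div_le_one hden]
          nlinarith
  linarith

end AuxLemmas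

/-- If `Δ ⊆ ℝ^d` is an almost reflexive lattice polytope, then
`Δ• := [Δ*] = conv(Δ* ∩ ℤ^d)` is an almost reflexive lattice polytope and `(Δ•)• = Δ`;
thus `Δ ↦ Δ•` is an involution on the set of almost reflexive polytopes in `ℝ^d`. -/
theorem almostReflexive_bullet_involution {d : ℕ} (hd : 0 < d) (Δ : Set (Fin d → ℝ))
    (h : IsAlmostReflexive Δ) :
    IsAlmostReflexive (latticeHull (polarDual Δ)) ∧
      latticeHull (polarDual (latticeHull (polarDual Δ))) = Δ := by
  obtain ⟨⟨F, hFfin, hFlatt, hFΔ⟩, h0, h3⟩ := h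
  obtain ⟨r, hr, hball⟩ : ∃ r > 0, Metric.ball (0:Fin d → ℝ) r ⊆ Δ := by
    rw [mem_interior_iff_mem_nhds] at h0
    rcases Metric.mem_nhds_iff.mp h0 with ⟨r, hr, hsub⟩
    exact ⟨r, hr, hsub⟩
  set B := latticeHull (polarDual Δ) with hB
  have hfin : (polarDual Δ ∩ latt (Fin d)).Finite := by
    apply (latt_bounded_finite (2/r)).subset
    rintro y ⟨hyP, hyl⟩
    exact ⟨hyl, fun i => polar_coord_bound hr hball hyP i⟩
  have hApoly : IsLatticePolytope B :=
    ⟨polarDual Δ ∩ latt (Fin d), hfin, Set.inter_subset_right, rfl⟩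
  set C := polarDual B with hC
  have hCconv : Convex ℝ C := convex_polarDual _
  have hΔC : Δ ⊆ C := by
    rw [← h3]
    exact latticeHull_subset hCconv
  have hballC : Metric.ball (0:Fin d → ℝ) r ⊆ C := hball.trans hΔC
  obtain ⟨R, hRsub⟩ := hFfin.isBounded.subset_closedBall 0
  have hΔR : ∀ x ∈ Δ, ‖x‖ ≤ R := by
    intro x hx
    have hsub : Δ ⊆ Metric.closedBall 0 R := by
      rw [hFΔ]; exact convexHull_min hRsub (convex_closedBall _ _)
    simpa [Metric.mem_closedBall, dist_zero_right] using hsub hx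
  have hlattb : ∀ m, m ∈ C → m ∈ latt (Fin d) → ‖m‖ ≤ R := by
    intro m hm hml
    apply hΔR
    rw [← h3]
    exact subset_convexHull ℝ _ ⟨hm, hml⟩
  obtain ⟨M, hM, hMC⟩ := bounded_of_latt_bounded hCconv hr hballC hlattb
  have hBconv : Convex ℝ B := convex_convexHull ℝ _
  have hBcl : IsClosed B := (hfin.isCompact_convexHull (𝕜 := ℝ)).isClosed
  have h0B : (0 : Fin d → ℝ) ∈ B :=
    subset_convexHull ℝ _ ⟨zero_mem_polarDual Δ, zero_mem_latt⟩
  have hballB := ball_subset_of_polar_bounded hBconv hBcl h0B hM (fun y hy => hMC y hy)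
  have h0int : (0 : Fin d → ℝ) ∈ interior B :=
    mem_interior.mpr ⟨_, hballB, Metric.isOpen_ball,
      Metric.mem_ball_self (by positivity)⟩
  refine ⟨⟨hApoly, h0int, ?_⟩, h3⟩
  rw [h3]
end
end
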